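/- arXiv:1609.03657 — 2 statements merged into one kernel-verified Lean document; each statement's English description precedes it below -/
import Mathlib

section
/- If for every time step k and every agent i, the communication range is updated as d_i[k+1] = max over j in N^O_i[k] of ‖r_i[k] − r_j[k]‖ + (‖u_i[k]‖ + γ)·T, then every outgoing neighbor of agent i at step 0 remains an outgoing neighbor at all subsequent steps: N^O_i[0] ⊆ N^O_i[k] for all k. -/
/-- The outgoing neighbor set of agent `i`: agents `j ≠ i` within range `d i`. -/
noncomputable def outNbr (N : ℕ) (r : Fin N → EuclideanSpace ℝ (Fin 2)) (d : Fin N → ℝ)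
    (i : Fin N) : Finset (Fin N) :=
  Finset.univ.filter (fun j => j ≠ i ∧ ‖r i - r j‖ ≤ d i)

/-- If communication ranges are updated by
`d_i[k+1] = max_{j ∈ N^O_i[k]} ‖r_i[k] − r_j[k]‖ + (‖u_i[k]‖ + γ)T`, then all
outgoing neighbors at step `0` remain outgoing neighbors at every step `k`. -/
theorem outNbr_preserved (N : ℕ) (T γ : ℝ) (hT : 0 < T) (hγ : 0 < γ)
    (r u : ℕ → Fin N → EuclideanSpace ℝ (Fin 2)) (d : ℕ → Fin N → ℝ)
    (hdyn : ∀ k i, r (k + 1) i = r k i + T • u k i)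
    (hu : ∀ k i, ‖u k i‖ ≤ γ)
    (h0 : ∀ i, (outNbr N (r 0) (d 0) i).Nonempty)
    (hd : ∀ k i (hne : (outNbr N (r k) (d k) i).Nonempty),
      d (k + 1) i = (outNbr N (r k) (d k) i).sup' hne (fun j => ‖r k i - r k j‖)
        + (‖u k i‖ + γ) * T) :
    ∀ k i, outNbr N (r 0) (d 0) i ⊆ outNbr N (r k) (d k) i := by
  intro k
  induction k with
  | zero => intro i; exact fun j hj => hj
  | succ k ih =>
    intro i j hj
    have hjk : j ∈ outNbr N (r k) (d k) i := ih i hj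
    simp only [outNbr, Finset.mem_filter, Finset.mem_univ, true_and] at hjk ⊢
    obtain ⟨hji, hdist⟩ := hjk
    refine ⟨hji, ?_⟩
    have hne : (outNbr N (r k) (d k) i).Nonempty := (h0 i).mono (ih i)
    rw [hd k i hne]
    have hsup : ‖r k i - r k j‖ ≤
        (outNbr N (r k) (d k) i).sup' hne (fun j => ‖r k i - r k j‖) := by
      apply Finset.le_sup' (fun j => ‖r k i - r k j‖)
      simp only [outNbr, Finset.mem_filter, Finset.mem_univ, true_and]
      exact ⟨hji, hdist⟩
    have key : r (k+1) i - r (k+1) j = (r k i - r k j) + T • (u k i - u k j) := by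
      rw [hdyn k i, hdyn k j, smul_sub]; abel
    calc ‖r (k+1) i - r (k+1) j‖ ≤ ‖r k i - r k j‖ + ‖T • (u k i - u k j)‖ := by
          rw [key]; exact norm_add_le _ _
      _ ≤ ‖r k i - r k j‖ + T * (‖u k i‖ + ‖u k j‖) := by
          gcongr
          rw [norm_smul, Real.norm_of_nonneg hT.le]
          exact mul_le_mul_of_nonneg_left (norm_sub_le _ _) hT.le
      _ ≤ (outNbr N (r k) (d k) i).sup' hne (fun j => ‖r k i - r k j‖)
            + (‖u k i‖ + γ) * T := by
          rw [mul_comm]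
          gcongr
          exact hu k j
end

section
/- Let the communication ranges be updated by Algorithm: d_i[k+1] = max_{j∈N^O_i[k]} ‖r_i[k]−r_j[k]‖ + (‖u_i[k]‖+γ)T when N^O_i[k] ∪ {i} ≠ V, and d_i[k+1] = 2·max_j ‖r_i[k]−r_j[k]‖ when N^O_i[k] ∪ {i} = V. Assume all inputs satisfy ‖u_j[k]‖ ≤ γ and, in the second case, each r_j[k+1] lies in the convex hull of {r_1[k],…,r_N[k]}. Then in both cases every outgoing neighbor of agent i at step k remains an outgoing neighbor at step k+1: N^O_i[k] ⊆ N^O_i[k+1]. -/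
/-- Under the modified range-control algorithm
(`d_i[k+1] = max_{j∈N^O_i[k]} ‖r_i[k]−r_j[k]‖ + (‖u_i[k]‖+γ)T` when
`N^O_i[k] ∪ {i} ≠ V`, and `d_i[k+1] = 2·max_j ‖r_i[k]−r_j[k]‖` when
`N^O_i[k] ∪ {i} = V`), with bounded inputs and — in the second case — next
positions in the convex hull of current ones, every outgoing neighbor at step
`k` remains an outgoing neighbor at step `k+1`. -/
theorem modified_algorithm_preserves (N : ℕ) (T γ : ℝ) (hT : 0 < T)
    (hγ : 0 < γ)
    (r r' u : Fin N → EuclideanSpace ℝ (Fin 2)) (d d' : Fin N → ℝ)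
    (hdyn : ∀ j, r' j = r j + T • u j)
    (hu : ∀ j, ‖u j‖ ≤ γ)
    (hcase1 : ∀ i, insert i (outNbr N r d i) ≠ Finset.univ →
      ∀ hne : (outNbr N r d i).Nonempty,
        d' i = (outNbr N r d i).sup' hne (fun j => ‖r i - r j‖)
          + (‖u i‖ + γ) * T)
    (hcase2 : ∀ i, insert i (outNbr N r d i) = Finset.univ →
      d' i = 2 * Finset.univ.sup' ⟨i, Finset.mem_univ i⟩
        (fun j => ‖r i - r j‖))
    (hconv : ∀ i, insert i (outNbr N r d i) = Finset.univ →
      ∀ j, r' j ∈ convexHull ℝ (Set.range r)) :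
    ∀ i, outNbr N r d i ⊆ outNbr N r' d' i := by
  intro i j hj
  simp only [outNbr, Finset.mem_filter, Finset.mem_univ, true_and] at hj ⊢
  obtain ⟨hji, hle⟩ := hj
  refine ⟨hji, ?_⟩
  by_cases hcase : insert i (outNbr N r d i) = Finset.univ
  · -- case 2
    rw [hcase2 i hcase]
    set M := Finset.univ.sup' ⟨i, Finset.mem_univ i⟩ (fun j => ‖r i - r j‖) with hM
    have hball : Set.range r ⊆ Metric.closedBall (r i) M := by
      rintro _ ⟨k, rfl⟩
      simp only [Metric.mem_closedBall, dist_eq_norm]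
      rw [norm_sub_rev, hM]
      exact Finset.le_sup' (fun j => ‖r i - r j‖) (Finset.mem_univ k)
    have hhull : convexHull ℝ (Set.range r) ⊆ Metric.closedBall (r i) M :=
      convexHull_min hball (convex_closedBall _ _)
    have hi' := hhull (hconv i hcase i)
    have hj' := hhull (hconv i hcase j)
    simp only [Metric.mem_closedBall] at hi' hj'
    have : dist (r' i) (r' j) ≤ dist (r' i) (r i) + dist (r i) (r' j) :=
      dist_triangle _ _ _
    rw [← dist_eq_norm]
    calc dist (r' i) (r' j) ≤ dist (r' i) (r i) + dist (r i) (r' j) := this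
      _ ≤ M + M := add_le_add hi' (by rwa [dist_comm] at hj')
      _ = 2 * M := by ring
  · -- case 1
    have hjmem : j ∈ outNbr N r d i := by
      simp [outNbr, hji, hle]
    have hne : (outNbr N r d i).Nonempty := ⟨j, hjmem⟩
    rw [hcase1 i hcase hne]
    have h1 : ‖r i - r j‖ ≤ (outNbr N r d i).sup' hne (fun j => ‖r i - r j‖) :=
      Finset.le_sup' (fun k => ‖r i - r k‖) hjmem
    have h2 : ‖r' i - r' j‖ ≤ ‖r i - r j‖ + (‖u i‖ + ‖u j‖) * T := by
      have : r' i - r' j = (r i - r j) + T • (u i - u j) := by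
        rw [hdyn i, hdyn j, smul_sub]; abel
      rw [this]
      calc ‖(r i - r j) + T • (u i - u j)‖
          ≤ ‖r i - r j‖ + ‖T • (u i - u j)‖ := norm_add_le _ _
        _ ≤ ‖r i - r j‖ + (‖u i‖ + ‖u j‖) * T := by
            rw [norm_smul, Real.norm_eq_abs, abs_of_pos hT]
            have := norm_sub_le (u i) (u j)
            nlinarith
    calc ‖r' i - r' j‖ ≤ ‖r i - r j‖ + (‖u i‖ + ‖u j‖) * T := h2
      _ ≤ (outNbr N r d i).sup' hne (fun j => ‖r i - r j‖) + (‖u i‖ + γ) * T := by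
          have := hu j
          have hT' := hT.le
          nlinarith
end
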